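/- arXiv:2306.16385 — 13 statements merged into one kernel-verified Lean document; each statement's English description precedes it below -/
import Mathlib

section
/- Let ⋆ be a finite type star operation on a domain D, {𝔞_λ} a family of ⋆-closed ideals of D, and ℱ a filter on the index set. If the filter limit lim_ℱ 𝔞_λ is a nonzero ideal of D, then it is a ⋆-closed ideal. -/
/-- A star operation on a domain `R` with fraction field `K`, viewed as an operation on the
nonzero fractional ideals of `R` in `K`. -/
structure StarOperation (R K : Type*) [CommRing R] [IsDomain R] [Field K] [Algebra R K]
    [IsFractionRing R K] where
  star : FractionalIdeal (nonZeroDivisors R) K → FractionalIdeal (nonZeroDivisors R) K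
  star_spanSingleton : ∀ a : K, a ≠ 0 →
    star (FractionalIdeal.spanSingleton (nonZeroDivisors R) a) =
      FractionalIdeal.spanSingleton (nonZeroDivisors R) a
  star_smul : ∀ a : K, a ≠ 0 → ∀ I, I ≠ 0 →
    star (FractionalIdeal.spanSingleton (nonZeroDivisors R) a * I) =
      FractionalIdeal.spanSingleton (nonZeroDivisors R) a * star I
  le_star : ∀ I, I ≠ 0 → I ≤ star I
  star_mono : ∀ I J, I ≠ 0 → J ≠ 0 → I ≤ J → star I ≤ star J
  star_idem : ∀ I, I ≠ 0 → star (star I) = star I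

/-- A star operation is of finite type if the star of an ideal is the union of the stars of the
nonzero finitely generated fractional ideals contained in it. -/
def StarOperation.IsFiniteType {R K : Type*} [CommRing R] [IsDomain R] [Field K] [Algebra R K]
    [IsFractionRing R K] (s : StarOperation R K) : Prop :=
  ∀ I, I ≠ 0 → ∀ x, x ∈ s.star I →
    ∃ J : FractionalIdeal (nonZeroDivisors R) K,
      J ≠ 0 ∧ (J : Submodule R K).FG ∧ J ≤ I ∧ x ∈ s.star J

/-- The filter limit of a family of ideals. -/
def filterLimitIdeal {R Λ : Type*} [CommRing R] (I : Λ → Ideal R) (F : Filter Λ) : Ideal R where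
  carrier := {r : R | {l | r ∈ I l} ∈ F}
  zero_mem' := by
    simp only [Set.mem_setOf_eq]
    exact Filter.univ_mem' fun l => (I l).zero_mem
  add_mem' := by
    intro a b ha hb
    exact Filter.mem_of_superset (Filter.inter_mem ha hb) fun l hl => (I l).add_mem hl.1 hl.2
  smul_mem' := by
    intro c x hx
    exact Filter.mem_of_superset hx fun l hl => (I l).smul_mem c hl

/-- If `⋆` is a finite type star operation on a domain `D` and `{𝔞_λ}` is a family of `⋆`-closed
ideals, then any nonzero filter limit of the family is again `⋆`-closed. -/
theorem filterLimit_star_closed {R K Λ : Type*} [CommRing R] [IsDomain R] [Field K] [Algebra R K]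
    [IsFractionRing R K] (s : StarOperation R K) (hft : s.IsFiniteType)
    (a : Λ → Ideal R) (ha0 : ∀ l, a l ≠ ⊥)
    (hstar : ∀ l, s.star ((a l : FractionalIdeal (nonZeroDivisors R) K)) =
      (a l : FractionalIdeal (nonZeroDivisors R) K))
    (F : Filter Λ) [F.NeBot] (hne : filterLimitIdeal a F ≠ ⊥) :
    s.star ((filterLimitIdeal a F : FractionalIdeal (nonZeroDivisors R) K)) =
      (filterLimitIdeal a F : FractionalIdeal (nonZeroDivisors R) K) := by
  set L := filterLimitIdeal a F with hL
  have hLne : (L : FractionalIdeal (nonZeroDivisors R) K) ≠ 0 := by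
    rwa [Ne, FractionalIdeal.coeIdeal_eq_zero]
  apply le_antisymm _ (s.le_star _ hLne)
  intro x hx
  obtain ⟨J, hJ0, hJfg, hJle, hxJ⟩ := hft _ hLne x hx
  obtain ⟨T, hT⟩ := hJfg
  -- each generator of J comes from an element of L
  have hgen : ∀ t : K, ∃ r, t ∈ T → r ∈ L ∧ algebraMap R K r = t := by
    intro t
    by_cases ht : t ∈ T
    · have htJ : t ∈ J := by
        rw [← FractionalIdeal.mem_coe, ← hT]
        exact Submodule.subset_span ht
      obtain ⟨r, hr1, hr2⟩ := (FractionalIdeal.mem_coeIdeal _).1 (hJle htJ)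
      exact ⟨r, fun _ => ⟨hr1, hr2⟩⟩
    · exact ⟨0, fun h => absurd h ht⟩
  choose rt hrt using hgen
  -- the set of indices where all generators lie in a l
  have hS : (⋂ t ∈ T, {l | rt t ∈ a l}) ∈ F := by
    refine (Filter.biInter_finset_mem T).2 ?_
    intro t ht
    exact (hrt t ht).1
  set S := ⋂ t ∈ T, {l | rt t ∈ a l} with hSdef
  -- for l ∈ S, J ≤ a l, hence x ∈ a l
  have hxl : ∀ l ∈ S, x ∈ ((a l : FractionalIdeal (nonZeroDivisors R) K)) := by
    intro l hl
    have hJal : J ≤ (a l : FractionalIdeal (nonZeroDivisors R) K) := by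
      rw [← FractionalIdeal.coe_le_coe, ← hT, Submodule.span_le]
      intro t ht
      rw [SetLike.mem_coe, FractionalIdeal.mem_coe, FractionalIdeal.mem_coeIdeal]
      exact ⟨rt t, Set.mem_iInter₂.1 hl t ht, (hrt t ht).2⟩
    have hal0 : ((a l : FractionalIdeal (nonZeroDivisors R) K)) ≠ 0 := by
      rw [Ne, FractionalIdeal.coeIdeal_eq_zero]
      exact ha0 l
    have := s.star_mono J _ hJ0 hal0 hJal hxJ
    rwa [hstar l] at this
  -- S nonempty: pick l0, get r with algebraMap r = x
  obtain ⟨l0, hl0⟩ := Filter.nonempty_of_mem hS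
  obtain ⟨r, _, hr2⟩ := (FractionalIdeal.mem_coeIdeal _).1 (hxl l0 hl0)
  have hrL : r ∈ L := by
    refine Filter.mem_of_superset hS ?_
    intro l hl
    obtain ⟨r', hr'1, hr'2⟩ := (FractionalIdeal.mem_coeIdeal _).1 (hxl l hl)
    have : r' = r := IsFractionRing.injective R K (by rw [hr'2, hr2])
    rwa [← this]
  exact (FractionalIdeal.mem_coeIdeal _).2 ⟨r, hrL, hr2⟩
end

section
/- Let D = ⋂_λ D_λ be an intersection of a family of local overrings of D (inside the fraction field K of D), with 𝔭_λ the center in D of the maximal ideal 𝔪_λ of D_λ. If I is a t-ideal of D (I_t = I, I proper) and J ⊆ I is a nonzero finitely-generated ideal, then J ⊆ 𝔭_λ for some λ. -/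
/-- Let `D = ⋂ D_λ` be an intersection of a family of local overrings inside its fraction
field `K`, with `𝔭_λ` the center in `D` of the maximal ideal of `D_λ`.  If `I` is a t-ideal of
`D` and `J ⊆ I` is a nonzero finitely generated ideal, then `J ⊆ 𝔭_λ` for some `λ`. -/
theorem fg_subideal_le_center {K Λ : Type*} [Field K] (D : Subring K) [IsFractionRing ↥D K]
    (Dl : Λ → Subring K) [∀ l, IsLocalRing ↥(Dl l)]
    (hle : ∀ l, D ≤ Dl l)
    (hint : (D : Set K) = ⋂ l, ↑(Dl l))
    (p : Λ → Ideal ↥D)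
    (hp : ∀ l, p l = (IsLocalRing.maximalIdeal ↥(Dl l)).comap (Subring.inclusion (hle l)))
    (I : Ideal ↥D) (hItop : I ≠ ⊤)
    (hIt : ∀ J : Ideal ↥D, J ≠ ⊥ → J.FG → J ≤ I →
      (((J : FractionalIdeal (nonZeroDivisors ↥D) K)⁻¹)⁻¹ : FractionalIdeal (nonZeroDivisors ↥D) K)
        ≤ (I : FractionalIdeal (nonZeroDivisors ↥D) K))
    (J : Ideal ↥D) (hJ0 : J ≠ ⊥) (hJfg : J.FG) (hJI : J ≤ I) :
    ∃ l, J ≤ p l := by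
  by_contra hcon
  push_neg at hcon
  have hJne : (J : FractionalIdeal (nonZeroDivisors ↥D) K) ≠ 0 := by
    simpa using hJ0
  have halg : ∀ x : ↥D, algebraMap ↥D K x = (x : K) := fun x => rfl
  -- J⁻¹ ≤ 1
  have hinv_le : ((J : FractionalIdeal (nonZeroDivisors ↥D) K)⁻¹) ≤ 1 := by
    intro y hy0
    have hy := (FractionalIdeal.mem_inv_iff hJne).mp (FractionalIdeal.mem_coe.mp hy0)
    have hyD : y ∈ (D : Set K) := by
      rw [hint]
      refine Set.mem_iInter.2 fun l => ?_
      obtain ⟨x, hxJ, hxp⟩ := SetLike.not_le_iff_exists.mp (hcon l)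
      have hxu : IsUnit (Subring.inclusion (hle l) x) := by
        by_contra h
        exact hxp (by rw [hp l]; exact h)
      obtain ⟨v, hv⟩ := hxu.exists_right_inv
      have hxv : (x : K) * (v : K) = 1 := by
        have := congrArg (Subring.subtype (Dl l)) hv
        simpa using this
      have h1 : y * algebraMap ↥D K x ∈ (1 : FractionalIdeal (nonZeroDivisors ↥D) K) :=
        hy _ (FractionalIdeal.mem_coeIdeal_of_mem _ hxJ)
      rw [FractionalIdeal.mem_one_iff] at h1
      obtain ⟨d, hd⟩ := h1
      have hyval : y = (d : K) * (v : K) := by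
        have hd' : (d : K) = y * (x : K) := hd
        rw [hd', mul_assoc, hxv, mul_one]
      rw [hyval]
      exact mul_mem (hle l d.2) v.2
    exact FractionalIdeal.mem_coe.mpr (FractionalIdeal.mem_one_iff _ |>.mpr ⟨⟨y, hyD⟩, rfl⟩)
  have hinv_ge : (1 : FractionalIdeal (nonZeroDivisors ↥D) K) ≤
      ((J : FractionalIdeal (nonZeroDivisors ↥D) K)⁻¹) := by
    intro y hy0
    have hy := FractionalIdeal.mem_coe.mp hy0
    refine FractionalIdeal.mem_coe.mpr ((FractionalIdeal.mem_inv_iff hJne).mpr ?_)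
    intro z hz
    obtain ⟨d, hd⟩ := FractionalIdeal.mem_one_iff _ |>.mp hy
    obtain ⟨j, hjJ, hj⟩ := FractionalIdeal.mem_coeIdeal _ |>.mp hz
    exact FractionalIdeal.mem_one_iff _ |>.mpr ⟨d * j, by rw [map_mul, hd, hj]⟩
  have hinv : ((J : FractionalIdeal (nonZeroDivisors ↥D) K)⁻¹) = 1 :=
    le_antisymm hinv_le hinv_ge
  have h1le := hIt J hJ0 hJfg hJI
  rw [hinv, inv_one] at h1le
  have h1 : (1 : K) ∈ (I : FractionalIdeal (nonZeroDivisors ↥D) K) :=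
    FractionalIdeal.mem_coe.mp
      (h1le (FractionalIdeal.mem_coe.mpr (FractionalIdeal.one_mem_one _)))
  obtain ⟨a, haI, ha⟩ := FractionalIdeal.mem_coeIdeal _ |>.mp h1
  have : a = 1 := IsFractionRing.injective ↥D K (by rw [ha, map_one])
  exact hItop (Ideal.eq_top_iff_one I |>.mpr (this ▸ haI))
end

section
/- Let D be a domain with fraction field K and E ⊆ K nonempty. Then the ring Int^R(E,D) = {φ ∈ K(x) | φ(a) ∈ D for all a ∈ E} is integrally closed if and only if D is integrally closed. -/
variable {K : Type*} [Field K]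

theorem eval₂_ne_zero_of_dvd {p q : Polynomial K} (h : p ∣ q) {a : K}
    (hq : q.eval₂ (RingHom.id K) a ≠ 0) : p.eval₂ (RingHom.id K) a ≠ 0 := by
  obtain ⟨c, rfl⟩ := h
  rw [Polynomial.eval₂_mul] at hq
  exact left_ne_zero_of_mul hq

/-- The ring of integer-valued rational functions on `E ⊆ K` over the subring `D ⊆ K`:
rational functions defined at every point of `E` whose values there lie in `D`. -/
def IntR (E : Set K) (D : Subring K) : Subring (RatFunc K) where
  carrier := {φ | ∀ a ∈ E, φ.denom.eval₂ (RingHom.id K) a ≠ 0 ∧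
    RatFunc.eval (RingHom.id K) a φ ∈ D}
  one_mem' := by
    intro a _
    refine ⟨by simp, ?_⟩
    simpa using one_mem D
  zero_mem' := by
    intro a _
    refine ⟨by simp, ?_⟩
    simpa using zero_mem D
  mul_mem' := by
    intro x y hx hy a ha
    obtain ⟨hx1, hx2⟩ := hx a ha
    obtain ⟨hy1, hy2⟩ := hy a ha
    refine ⟨eval₂_ne_zero_of_dvd (RatFunc.denom_mul_dvd x y) ?_, ?_⟩
    · rw [Polynomial.eval₂_mul]; exact mul_ne_zero hx1 hy1
    · rw [RatFunc.eval_mul _ _ hx1 hy1]; exact mul_mem hx2 hy2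
  add_mem' := by
    intro x y hx hy a ha
    obtain ⟨hx1, hx2⟩ := hx a ha
    obtain ⟨hy1, hy2⟩ := hy a ha
    refine ⟨eval₂_ne_zero_of_dvd (RatFunc.denom_add_dvd x y) ?_, ?_⟩
    · rw [Polynomial.eval₂_mul]; exact mul_ne_zero hx1 hy1
    · rw [RatFunc.eval_add _ _ hx1 hy1]; exact add_mem hx2 hy2
  neg_mem' := by
    intro x hx a ha
    obtain ⟨hx1, hx2⟩ := hx a ha
    have hC : (-1 : RatFunc K) = RatFunc.C (-1) := by
      rw [map_neg, map_one]
    have hd1 : (RatFunc.denom (-1 : RatFunc K)).eval₂ (RingHom.id K) a ≠ 0 := by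
      rw [hC, RatFunc.denom_C]; simp
    have hneg : (-x) = (-1 : RatFunc K) * x := by ring
    constructor
    · refine eval₂_ne_zero_of_dvd ?_ (q := RatFunc.denom (-1 : RatFunc K) * RatFunc.denom x) ?_
      · rw [hneg]; exact RatFunc.denom_mul_dvd _ _
      · rw [Polynomial.eval₂_mul]; exact mul_ne_zero hd1 hx1
    · rw [hneg, RatFunc.eval_mul _ _ hd1 hx1, hC, RatFunc.eval_C]
      simpa using neg_mem hx2

/-- Evaluation at a point `a ∈ E` as a ring homomorphism `IntR E D →+* D`. -/
noncomputable def evalHom (E : Set K) (D : Subring K) (a : K) (ha : a ∈ E) :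
    IntR E D →+* D where
  toFun φ := ⟨RatFunc.eval (RingHom.id K) a φ.1, (φ.2 a ha).2⟩
  map_one' := by
    apply Subtype.ext
    simp
  map_mul' x y := by
    apply Subtype.ext
    exact RatFunc.eval_mul _ _ (x.2 a ha).1 (y.2 a ha).1
  map_zero' := by
    apply Subtype.ext
    simp
  map_add' x y := by
    apply Subtype.ext
    exact RatFunc.eval_add _ _ (x.2 a ha).1 (y.2 a ha).1


/-- The local ring of rational functions defined at `a`. -/
def Oa (a : K) : Subring (RatFunc K) where
  carrier := {φ | φ.denom.eval₂ (RingHom.id K) a ≠ 0}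
  one_mem' := by simp
  zero_mem' := by simp
  mul_mem' := by
    intro x y hx hy
    refine eval₂_ne_zero_of_dvd (RatFunc.denom_mul_dvd x y) ?_
    rw [Polynomial.eval₂_mul]; exact mul_ne_zero hx hy
  add_mem' := by
    intro x y hx hy
    refine eval₂_ne_zero_of_dvd (RatFunc.denom_add_dvd x y) ?_
    rw [Polynomial.eval₂_mul]; exact mul_ne_zero hx hy
  neg_mem' := by
    intro x hx
    have hC : (-1 : RatFunc K) = RatFunc.C (-1) := by rw [map_neg, map_one]
    have hd1 : (RatFunc.denom (-1 : RatFunc K)).eval₂ (RingHom.id K) a ≠ 0 := by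
      rw [hC, RatFunc.denom_C]; simp
    have hneg : (-x) = (-1 : RatFunc K) * x := by ring
    refine eval₂_ne_zero_of_dvd ?_ (q := RatFunc.denom (-1 : RatFunc K) * RatFunc.denom x) ?_
    · rw [hneg]; exact RatFunc.denom_mul_dvd _ _
    · rw [Polynomial.eval₂_mul]; exact mul_ne_zero hd1 hx

noncomputable def evalKHom (a : K) : ↥(Oa a) →+* K where
  toFun φ := RatFunc.eval (RingHom.id K) a φ.1
  map_one' := by simp
  map_mul' x y := RatFunc.eval_mul _ _ x.2 y.2
  map_zero' := by simp
  map_add' x y := RatFunc.eval_add _ _ x.2 y.2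

lemma poly_mem_Oa (a : K) (q : Polynomial K) : algebraMap (Polynomial K) (RatFunc K) q ∈ Oa a := by
  show (RatFunc.denom _).eval₂ (RingHom.id K) a ≠ 0
  rw [RatFunc.denom_algebraMap]
  simp

lemma mem_Oa_of_isIntegral {a : K} {φ : RatFunc K}
    (h : IsIntegral ↥(Oa a) φ) : φ ∈ Oa a := by
  obtain ⟨p, hm, hp⟩ := h
  set P : Polynomial (RatFunc K) := p.map (Oa a).subtype with hPdef
  have hPm : P.Monic := hm.map _
  have hPeval : P.eval φ = 0 := by
    rw [hPdef, Polynomial.eval_map]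
    exact hp
  set n := P.natDegree with hn
  set f := φ.num with hf
  set g := φ.denom with hg
  set F : RatFunc K := algebraMap (Polynomial K) (RatFunc K) f with hF
  set G : RatFunc K := algebraMap (Polynomial K) (RatFunc K) g with hG
  have hGne : G ≠ 0 := by
    simp only [hG, ne_eq, FaithfulSMul.algebraMap_eq_zero_iff]
    exact RatFunc.denom_ne_zero φ
  have hφG : φ * G = F := by
    rw [hF, hG]
    conv_lhs => rw [← RatFunc.num_div_denom φ]
    exact div_mul_cancel₀ _ hGne
  -- main polynomial identity
  have key : F ^ n + G * (∑ i ∈ Finset.range n, P.coeff i * F ^ i * G ^ (n - 1 - i)) = 0 := by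
    have h0 : P.eval φ * G ^ n = 0 := by rw [hPeval, zero_mul]
    rw [Polynomial.eval_eq_sum_range, Finset.sum_mul] at h0
    have hterm : ∀ i ∈ Finset.range (n + 1),
        P.coeff i * φ ^ i * G ^ n = P.coeff i * (F ^ i * G ^ (n - i)) := by
      intro i hi
      have hile : i ≤ n := Nat.lt_succ_iff.mp (Finset.mem_range.mp hi)
      have : φ ^ i * G ^ n = F ^ i * G ^ (n - i) := by
        calc φ ^ i * G ^ n = (φ * G) ^ i * G ^ (n - i) := by
              rw [mul_pow, mul_assoc, ← pow_add, Nat.add_sub_cancel' hile]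
          _ = F ^ i * G ^ (n - i) := by rw [hφG]
      rw [mul_assoc, this]
    rw [Finset.sum_congr rfl hterm, Finset.sum_range_succ] at h0
    rw [hPm.coeff_natDegree, one_mul] at h0
    have hsplit : ∀ i ∈ Finset.range n,
        P.coeff i * (F ^ i * G ^ (n - i)) = G * (P.coeff i * F ^ i * G ^ (n - 1 - i)) := by
      intro i hi
      have hilt : i < n := Finset.mem_range.mp hi
      have : G ^ (n - i) = G * G ^ (n - 1 - i) := by
        rw [← pow_succ']
        congr 1
        omega
      rw [this]
      ring
    rw [Finset.sum_congr rfl hsplit, ← Finset.mul_sum] at h0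
    rw [Nat.sub_self, pow_zero, mul_one] at h0
    rw [add_comm] at h0
    exact h0
  -- lift the identity to the subring `Oa a` and evaluate at `a`
  set F' : ↥(Oa a) := ⟨F, poly_mem_Oa a f⟩ with hF'
  set G' : ↥(Oa a) := ⟨G, poly_mem_Oa a g⟩ with hG'
  have key' : F' ^ n + G' * (∑ i ∈ Finset.range n, p.coeff i * F' ^ i * G' ^ (n - 1 - i))
      = 0 := by
    apply Subtype.ext
    push_cast
    convert key using 3
    apply Finset.sum_congr rfl
    intro i _
    rw [hPdef, Polynomial.coeff_map]
    rfl
  show φ.denom.eval₂ (RingHom.id K) a ≠ 0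
  intro hga
  have hGa : evalKHom a G' = 0 := by
    simp only [evalKHom, RingHom.coe_mk, MonoidHom.coe_mk, OneHom.coe_mk, hG', hG,
      RatFunc.eval_algebraMap]
    simpa using hga
  have hFa : evalKHom a F' = f.eval₂ (RingHom.id K) a := by
    simp only [evalKHom, RingHom.coe_mk, MonoidHom.coe_mk, OneHom.coe_mk, hF', hF,
      RatFunc.eval_algebraMap]
    simp
  have hev := congrArg (evalKHom a) key'
  rw [map_add, map_mul, map_pow, map_zero, hGa, hFa, zero_mul, add_zero] at hev
  have hFa0 : f.eval₂ (RingHom.id K) a = 0 := by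
    rcases Nat.eq_zero_or_pos n with hn0 | hn0
    · rw [hn0, pow_zero] at hev
      exact absurd hev one_ne_zero
    · exact pow_eq_zero_iff hn0.ne'|>.mp hev
  obtain ⟨u, v, huv⟩ := RatFunc.isCoprime_num_denom φ
  have := congrArg (Polynomial.eval₂ (RingHom.id K) a) huv
  rw [Polynomial.eval₂_add, Polynomial.eval₂_mul, Polynomial.eval₂_mul, Polynomial.eval₂_one]
      at this
  rw [show φ.num = f from rfl, show φ.denom = g from rfl, hFa0, hga] at this
  simp at this


/-- `Int^R(E,D)` is integrally closed (in `K(x)`) if and only if `D` is integrally closed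
(in its fraction field `K`). -/
theorem intR_integrallyClosed_iff {K : Type*} [Field K] (D : Subring K) [IsFractionRing ↥D K]
    (E : Set K) (hE : E.Nonempty) :
    (∀ φ : RatFunc K, IsIntegral ↥(IntR E D) φ → φ ∈ IntR E D) ↔
      (∀ x : K, IsIntegral ↥D x → x ∈ D) := by
  constructor
  · -- IntR integrally closed → D integrally closed
    intro h x hx
    obtain ⟨a, ha⟩ := hE
    -- the constant embedding of D into IntR
    have hCmem : ∀ d : ↥D, RatFunc.C (d : K) ∈ IntR E D := by
      intro d b _
      refine ⟨by rw [RatFunc.denom_C]; simp, ?_⟩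
      rw [RatFunc.eval_C]
      exact d.2
    let CD : ↥D →+* ↥(IntR E D) :=
      { toFun := fun d => ⟨RatFunc.C (d : K), hCmem d⟩
        map_one' := by apply Subtype.ext; simp
        map_mul' := fun x y => by apply Subtype.ext; simp
        map_zero' := by apply Subtype.ext; simp
        map_add' := fun x y => by apply Subtype.ext; simp }
    have hint : IsIntegral ↥(IntR E D) (RatFunc.C x) := by
      obtain ⟨p, hm, hp⟩ := hx
      refine ⟨p.map CD, hm.map _, ?_⟩
      have : (IntR E D).subtype.comp CD = (RatFunc.C).comp D.subtype := by
        ext d; rfl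
      calc Polynomial.eval₂ (algebraMap ↥(IntR E D) (RatFunc K)) (RatFunc.C x) (p.map CD)
          = Polynomial.eval₂ ((IntR E D).subtype.comp CD) (RatFunc.C x) p := by
            rw [Polynomial.eval₂_map]; rfl
        _ = Polynomial.eval₂ ((RatFunc.C).comp D.subtype) (RatFunc.C x) p := by rw [this]
        _ = RatFunc.C (Polynomial.eval₂ D.subtype x p) := (Polynomial.hom_eval₂ p _ _ _).symm
        _ = 0 := by
            rw [show Polynomial.eval₂ D.subtype x p = 0 from hp]
            exact map_zero _
    have hmem := h _ hint
    have := (hmem a ha).2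
    rwa [RatFunc.eval_C] at this
  · -- D integrally closed → IntR integrally closed
    intro hD φ hφ a ha
    have hle : IntR E D ≤ Oa a := fun ψ hψ => (hψ a ha).1
    obtain ⟨p, hm, hp⟩ := hφ
    -- φ is integral over Oa a
    have hOa : φ ∈ Oa a := by
      apply mem_Oa_of_isIntegral
      refine ⟨p.map (Subring.inclusion hle), hm.map _, ?_⟩
      calc Polynomial.eval₂ (algebraMap ↥(Oa a) (RatFunc K)) φ (p.map (Subring.inclusion hle))
          = Polynomial.eval₂ ((Oa a).subtype.comp (Subring.inclusion hle)) φ p := by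
            rw [Polynomial.eval₂_map]; rfl
        _ = Polynomial.eval₂ ((IntR E D).subtype) φ p := by
            rfl
        _ = 0 := hp
    refine ⟨hOa, ?_⟩
    -- evaluate the integral equation at a
    set φ' : ↥(Oa a) := ⟨φ, hOa⟩ with hφ'
    have hOeval : Polynomial.eval₂ (Subring.inclusion hle) φ' p = 0 := by
      apply Subtype.ext
      have : ((Oa a).subtype) (Polynomial.eval₂ (Subring.inclusion hle) φ' p)
          = Polynomial.eval₂ ((Oa a).subtype.comp (Subring.inclusion hle)) φ p :=
        Polynomial.hom_eval₂ p _ _ _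
      rw [show (((Polynomial.eval₂ (Subring.inclusion hle) φ' p) : ↥(Oa a)) : RatFunc K)
          = ((Oa a).subtype) (Polynomial.eval₂ (Subring.inclusion hle) φ' p) from rfl, this]
      calc Polynomial.eval₂ ((Oa a).subtype.comp (Subring.inclusion hle)) φ p
          = Polynomial.eval₂ ((IntR E D).subtype) φ p := by rfl
        _ = 0 := hp
    apply hD
    refine ⟨p.map (evalHom E D a ha), hm.map _, ?_⟩
    have hcomp : (D.subtype).comp (evalHom E D a ha) = (evalKHom a).comp (Subring.inclusion hle) := by
      ext ψ; rfl
    calc Polynomial.eval₂ (algebraMap ↥D K) (RatFunc.eval (RingHom.id K) a φ) (p.map (evalHom E D a ha))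
        = Polynomial.eval₂ ((D.subtype).comp (evalHom E D a ha)) (RatFunc.eval (RingHom.id K) a φ) p := by
          rw [Polynomial.eval₂_map]; rfl
      _ = Polynomial.eval₂ ((evalKHom a).comp (Subring.inclusion hle)) (evalKHom a φ') p := by
          rw [hcomp]; rfl
      _ = (evalKHom a) (Polynomial.eval₂ (Subring.inclusion hle) φ' p) :=
          (Polynomial.hom_eval₂ p _ _ _).symm
      _ = 0 := by rw [hOeval]; exact map_zero _
end

section
/- Let D be a PVD with maximal ideal 𝔪 and associated valuation domain V, and suppose 𝔪 is principal as an ideal of V. Then V is a finitely-generated D-module if and only if the residue field extension V/𝔪 over D/𝔪 has finite degree. -/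
/-- Let `D` be a pseudovaluation domain with associated valuation domain `V` sharing the same
maximal ideal `𝔪`, with `𝔪` principal as an ideal of `V`.  Then `V` is a finitely generated
`D`-module if and only if the residue field extension `V/𝔪` over `D/𝔪` has finite degree. -/
theorem pvd_module_finite_iff_residue_finite {V : Type*} [CommRing V] [IsDomain V]
    [ValuationRing V] (D : Subring V) [IsLocalRing ↥D]
    (hshare : Subtype.val '' ((IsLocalRing.maximalIdeal ↥D : Ideal ↥D) : Set ↥D) =
      ((IsLocalRing.maximalIdeal V : Ideal V) : Set V))
    (hprin : (IsLocalRing.maximalIdeal V).IsPrincipal)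
    (hcomap : IsLocalRing.maximalIdeal ↥D ≤ (IsLocalRing.maximalIdeal V).comap D.subtype) :
    Module.Finite ↥D V ↔
      @Module.Finite (↥D ⧸ IsLocalRing.maximalIdeal ↥D) (V ⧸ IsLocalRing.maximalIdeal V) _ _
        ((Ideal.quotientMap (IsLocalRing.maximalIdeal V) D.subtype hcomap).toModule) := by
  classical
  set mD := IsLocalRing.maximalIdeal ↥D with hmD
  set mV := IsLocalRing.maximalIdeal V with hmV
  letI : Module (↥D ⧸ mD) (V ⧸ mV) := (Ideal.quotientMap mV D.subtype hcomap).toModule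
  have hsmul : ∀ (r : ↥D ⧸ mD) (x : V ⧸ mV),
      r • x = Ideal.quotientMap mV D.subtype hcomap r * x := fun r x => rfl
  have hmk : ∀ d : ↥D, Ideal.quotientMap mV D.subtype hcomap (Ideal.Quotient.mk mD d)
      = Ideal.Quotient.mk mV (↑d : V) := fun d => Ideal.quotientMap_mk
  have hdsmul : ∀ (d : ↥D) (v : V), d • v = (↑d : V) * v := fun _ _ => rfl
  have hmem : ∀ v : V, v ∈ mV → ∃ d : ↥D, d ∈ mD ∧ (↑d : V) = v := by
    intro v hv
    have : v ∈ Subtype.val '' ((mD : Ideal ↥D) : Set ↥D) := by rw [hshare]; exact hv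
    obtain ⟨d, hd, hdv⟩ := this
    exact ⟨d, hd, hdv⟩
  constructor
  · intro h
    obtain ⟨s, hs⟩ := Module.finite_def.mp h
    refine Module.finite_def.mpr ⟨s.image (Ideal.Quotient.mk mV), ?_⟩
    rw [eq_top_iff]
    rintro x -
    obtain ⟨v, rfl⟩ := Ideal.Quotient.mk_surjective x
    have hv : v ∈ Submodule.span ↥D (s : Set V) := by rw [hs]; trivial
    refine Submodule.span_induction ?_ ?_ ?_ ?_ hv
    · intro w hw
      exact Submodule.subset_span (by
        simp only [Finset.coe_image, Set.mem_image, Finset.mem_coe]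
        exact ⟨w, hw, rfl⟩)
    · simp
    · intro a b _ _ ha hb
      rw [map_add]; exact Submodule.add_mem _ ha hb
    · intro d a _ ha
      have : Ideal.Quotient.mk mV (d • a)
          = Ideal.quotientMap mV D.subtype hcomap (Ideal.Quotient.mk mD d) * (Ideal.Quotient.mk mV a) := by
        rw [hdsmul, map_mul, hmk]
      rw [this, ← hsmul]
      exact Submodule.smul_mem _ _ ha
  · intro h
    obtain ⟨s, hs⟩ := Module.finite_def.mp h
    choose f hf using fun x : V ⧸ mV => Ideal.Quotient.mk_surjective x
    set M : Submodule ↥D V :=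
      Submodule.span ↥D ((insert 1 (s.image f) : Finset V) : Set V) with hM
    have h1M : (1 : V) ∈ M := Submodule.subset_span (by simp)
    have hmVM : ∀ v : V, v ∈ mV → v ∈ M := by
      intro v hv
      obtain ⟨d, _, rfl⟩ := hmem v hv
      have : (↑d : V) = d • (1 : V) := by rw [hdsmul, mul_one]
      rw [this]
      exact Submodule.smul_mem _ _ h1M
    have key : ∀ x : V ⧸ mV, ∀ v : V, Ideal.Quotient.mk mV v = x → v ∈ M := by
      intro x
      have hx : x ∈ Submodule.span (↥D ⧸ mD) (s : Set (V ⧸ mV)) := by rw [hs]; trivial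
      refine Submodule.span_induction (p := fun x _ => ∀ v : V, Ideal.Quotient.mk mV v = x → v ∈ M)
        ?_ ?_ ?_ ?_ hx
      · intro y hy v hv
        have hfy : f y ∈ M := Submodule.subset_span (by simp [hy]; right; exact ⟨y, hy, rfl⟩)
        have : v - f y ∈ mV := by
          rw [← Ideal.Quotient.eq_zero_iff_mem, map_sub, hv, hf, sub_self]
        have := hmVM _ this
        have hv' : v = (v - f y) + f y := by ring
        rw [hv']; exact Submodule.add_mem _ this hfy
      · intro v hv
        exact hmVM v (Ideal.Quotient.eq_zero_iff_mem.mp hv)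
      · intro a b _ _ ha hb v hv
        have haM := ha (f a) (hf a)
        have hbM := hb (f b) (hf b)
        have : v - (f a + f b) ∈ mV := by
          rw [← Ideal.Quotient.eq_zero_iff_mem, map_sub, map_add, hf, hf, hv, sub_self]
        have hv' : v = (v - (f a + f b)) + (f a + f b) := by ring
        rw [hv']
        exact Submodule.add_mem _ (hmVM _ this) (Submodule.add_mem _ haM hbM)
      · intro r a _ ha v hv
        obtain ⟨d, rfl⟩ := Ideal.Quotient.mk_surjective r
        have haM := ha (f a) (hf a)
        have hda : Ideal.Quotient.mk mV (d • f a) = (Ideal.Quotient.mk mD d) • a := by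
          rw [hdsmul, map_mul, hsmul, hmk, hf]
        have : v - d • f a ∈ mV := by
          rw [← Ideal.Quotient.eq_zero_iff_mem, map_sub, hda, hv, sub_self]
        have hv' : v = (v - d • f a) + d • f a := by ring
        rw [hv']
        exact Submodule.add_mem _ (hmVM _ this) (Submodule.smul_mem _ _ haM)
    refine Module.finite_def.mpr ⟨insert 1 (s.image f), ?_⟩
    rw [eq_top_iff]
    rintro v -
    exact key (Ideal.Quotient.mk mV v) v rfl
end

section
/- Let D be a PVD with maximal ideal 𝔪 and associated valuation domain V such that 𝔪 = tV is principal in V and [V/𝔪 : D/𝔪] = n < ∞, with t₁,...,tₙ ∈ V× units whose residues form a D/𝔪-basis of V/𝔪. Then 𝔪 = (t t₁, ..., t tₙ)D is finitely generated as an ideal of D. -/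
/-- Let `D` be a pseudovaluation domain with associated valuation domain `V` sharing the same
maximal ideal `𝔪 = tV`, principal in `V`, where the residue field `V/𝔪` has a `D/𝔪`-basis
given by the residues of units `t₁, …, tₙ` of `V`.  Then `𝔪 = (t t₁, …, t tₙ)D` is a finitely
generated ideal of `D`. -/
theorem pvd_maximalIdeal_fg {V : Type*} [CommRing V] [IsDomain V]
    [ValuationRing V] (D : Subring V) [IsLocalRing ↥D]
    (hshare : Subtype.val '' ((IsLocalRing.maximalIdeal ↥D : Ideal ↥D) : Set ↥D) =
      ((IsLocalRing.maximalIdeal V : Ideal V) : Set V))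
    (hcomap : IsLocalRing.maximalIdeal ↥D ≤ (IsLocalRing.maximalIdeal V).comap D.subtype)
    (t : V) (ht : IsLocalRing.maximalIdeal V = Ideal.span {t})
    (n : ℕ) (u : Fin n → V) (hu : ∀ i, IsUnit (u i))
    (b : @Module.Basis (Fin n) (↥D ⧸ IsLocalRing.maximalIdeal ↥D) (V ⧸ IsLocalRing.maximalIdeal V) _ _
      ((Ideal.quotientMap (IsLocalRing.maximalIdeal V) D.subtype hcomap).toModule))
    (hb : ∀ i, b i = Ideal.Quotient.mk (IsLocalRing.maximalIdeal V) (u i)) :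
    IsLocalRing.maximalIdeal ↥D = Ideal.span {x : ↥D | ∃ i, (x : V) = t * u i} := by
  classical
  letI := (Ideal.quotientMap (IsLocalRing.maximalIdeal V) D.subtype hcomap).toModule
  have hmem : ∀ x : ↥D, (x : V) ∈ IsLocalRing.maximalIdeal V →
      x ∈ IsLocalRing.maximalIdeal ↥D := by
    intro x hx
    have hx' : (x : V) ∈ Subtype.val ''
        ((IsLocalRing.maximalIdeal ↥D : Ideal ↥D) : Set ↥D) := by
      rw [hshare]; exact hx
    obtain ⟨y, hy, hyx⟩ := hx'
    rwa [show y = x from Subtype.ext hyx] at hy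
  have ht_mem : t ∈ IsLocalRing.maximalIdeal V := ht ▸ Ideal.mem_span_singleton_self t
  obtain ⟨i₀⟩ : Nonempty (Fin n) := b.index_nonempty
  have hg : ∀ i : Fin n, ∃ g : ↥D, g ∈ IsLocalRing.maximalIdeal ↥D ∧ (g : V) = t * u i := by
    intro i
    have hmul : t * u i ∈ Subtype.val ''
        ((IsLocalRing.maximalIdeal ↥D : Ideal ↥D) : Set ↥D) := by
      rw [hshare]; exact Ideal.mul_mem_right _ _ ht_mem
    obtain ⟨g, hgm, hgv⟩ := hmul
    exact ⟨g, hgm, hgv⟩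
  choose g hgm hgv using hg
  apply le_antisymm
  · intro x hx
    have hxv : (x : V) ∈ IsLocalRing.maximalIdeal V := hcomap hx
    rw [ht, Ideal.mem_span_singleton] at hxv
    obtain ⟨v, hv⟩ := hxv
    choose d hd using fun i => Ideal.Quotient.mk_surjective
      (I := IsLocalRing.maximalIdeal ↥D)
      (b.repr (Ideal.Quotient.mk (IsLocalRing.maximalIdeal V) v) i)
    have hdec : Ideal.Quotient.mk (IsLocalRing.maximalIdeal V)
        (v - ∑ i, (d i : V) * u i) = 0 := by
      rw [map_sub, map_sum, sub_eq_zero]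
      conv_lhs => rw [← b.sum_repr (Ideal.Quotient.mk (IsLocalRing.maximalIdeal V) v)]
      refine Finset.sum_congr rfl fun i _ => ?_
      rw [hb i, ← hd i]
      show Ideal.quotientMap (IsLocalRing.maximalIdeal V) D.subtype hcomap
        (Ideal.Quotient.mk (IsLocalRing.maximalIdeal ↥D) (d i)) * _ = _
      rw [Ideal.quotientMap_mk, ← map_mul]
      rfl
    have hsub : v - ∑ i, (d i : V) * u i ∈ IsLocalRing.maximalIdeal V := by
      rwa [← Ideal.Quotient.eq_zero_iff_mem]
    rw [ht, Ideal.mem_span_singleton] at hsub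
    obtain ⟨w, hw⟩ := hsub
    have hv' : v = (∑ i, (d i : V) * u i) + t * w := by
      rw [← hw]; ring
    have hwmem : t * (w * ↑(hu i₀).unit⁻¹) ∈ Subtype.val ''
        ((IsLocalRing.maximalIdeal ↥D : Ideal ↥D) : Set ↥D) := by
      rw [hshare]; exact Ideal.mul_mem_right _ _ ht_mem
    obtain ⟨e, -, hev⟩ := hwmem
    have h1 : (↑(hu i₀).unit⁻¹ : V) * u i₀ = 1 := (hu i₀).val_inv_mul
    have hxeq : x = (∑ i, d i * g i) + e * g i₀ := by
      apply Subtype.ext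
      push_cast
      rw [hv, hev, hgv i₀, hv', mul_add, Finset.mul_sum]
      have hsum : ∀ i ∈ Finset.univ, t * ((d i : V) * u i) = (d i : V) * (g i : V) := by
        intro i _; rw [hgv i]; ring
      rw [Finset.sum_congr rfl hsum]
      congr 1
      linear_combination (-(t * t * w)) * h1
    rw [hxeq]
    refine Ideal.add_mem _ (Ideal.sum_mem _ fun i _ => Ideal.mul_mem_left _ _ ?_)
      (Ideal.mul_mem_left _ _ ?_)
    · exact Ideal.subset_span ⟨i, hgv i⟩
    · exact Ideal.subset_span ⟨i₀, hgv i₀⟩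
  · rw [Ideal.span_le]
    rintro x ⟨i, hxi⟩
    exact hmem x (hxi ▸ Ideal.mul_mem_right _ _ ht_mem)
end

section
/- Let V be a valuation domain with valuation v, value group Γ, maximal ideal 𝔪, and fraction field K. Suppose the residue field V/𝔪 is not algebraically closed, so there exists a monic non-constant polynomial f ∈ V[x] of degree n with f(d) a unit of V for all d ∈ V. Then for all nonzero a₁, a₂ ∈ K, v(a₁ⁿ f(a₂/a₁)) = min{n·v(a₁), n·v(a₂)}. -/
/-- Let `V` be the valuation ring of a (multiplicative) valuation `v` on `K`, and let
`f ∈ V[x]` be a monic nonconstant polynomial that is unit-valued on `V`.  Then for all nonzero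
`a₁, a₂ ∈ K`, `v(a₁ⁿ f(a₂/a₁)) = max (v a₁ ^ n) (v a₂ ^ n)` (which, in additive notation, is
`min (n v(a₁), n v(a₂))`), where `n = deg f`. -/
theorem val_pow_mul_eval_unitValued {K Γ₀ : Type*} [Field K]
    [LinearOrderedCommGroupWithZero Γ₀] (v : Valuation K Γ₀)
    (f : Polynomial K) (hmonic : f.Monic) (hdeg : 0 < f.natDegree)
    (hcoeff : ∀ i, v (f.coeff i) ≤ 1)
    (hunit : ∀ d : K, v d ≤ 1 → v (f.eval d) = 1)
    (a₁ a₂ : K) (h1 : a₁ ≠ 0) (h2 : a₂ ≠ 0) :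
    v (a₁ ^ f.natDegree * f.eval (a₂ / a₁)) =
      max (v a₁ ^ f.natDegree) (v a₂ ^ f.natDegree) := by
  set n := f.natDegree with hn
  have hv1 : v a₁ ≠ 0 := by simpa using h1
  have hv2 : v a₂ ≠ 0 := by simpa using h2
  by_cases h : v (a₂ / a₁) ≤ 1
  · rw [v.map_mul, hunit _ h, mul_one, v.map_pow]
    have h21 : v a₂ ≤ v a₁ := by
      rw [v.map_div, div_le_one₀ (lt_of_le_of_ne (zero_le') (Ne.symm hv1))] at h
      exact h
    exact (max_eq_left (pow_le_pow_left' h21 n)).symm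
  · push_neg at h
    set u := a₁ / a₂ with hu
    have hune : u ≠ 0 := div_ne_zero h1 h2
    have hvu : v u < 1 := by
      have : u = (a₂ / a₁)⁻¹ := by rw [hu, inv_div]
      rw [this, v.map_inv]
      exact inv_lt_one_of_one_lt₀ h
    -- rewrite a₁^n * f(a₂/a₁) = a₂^n * S with S = ∑ coeff i * u^(n-i)
    set S : K := ∑ i ∈ Finset.range (n + 1), f.coeff i * u ^ (n - i) with hS
    have key : a₁ ^ n * f.eval (a₂ / a₁) = a₂ ^ n * S := by
      rw [Polynomial.eval_eq_sum_range, Finset.mul_sum, hS, Finset.mul_sum]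
      refine Finset.sum_congr rfl fun i hi => ?_
      have hin : i ≤ n := Nat.lt_succ_iff.1 (Finset.mem_range.1 hi)
      obtain ⟨k, hk⟩ := Nat.exists_eq_add_of_le hin
      rw [hk, hu, div_pow, div_pow, Nat.add_sub_cancel_left]
      field_simp
      ring
    have hSval : v S = 1 := by
      rw [hS, Finset.sum_range_succ, Nat.sub_self, pow_zero, mul_one,
        hmonic.coeff_natDegree]
      have hT : v (∑ i ∈ Finset.range n, f.coeff i * u ^ (n - i)) < 1 := by
        refine v.map_sum_lt one_ne_zero fun i hi => ?_
        have hin : i < n := Finset.mem_range.1 hi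
        rw [v.map_mul, v.map_pow]
        calc v (f.coeff i) * v u ^ (n - i) ≤ 1 * v u ^ (n - i) :=
              mul_le_mul_left (hcoeff i) _
          _ = v u ^ (n - i) := one_mul _
          _ < 1 := pow_lt_one₀ zero_le' hvu (Nat.sub_ne_zero_of_lt hin)
      simpa using v.map_add_eq_of_lt_right (x := _) (y := (1 : K)) (by simpa using hT)
    rw [key, v.map_mul, hSval, mul_one, v.map_pow]
    have h12 : v a₁ ≤ v a₂ := le_of_lt (by
      rw [v.map_div] at h
      by_contra hc
      push_neg at hc
      exact absurd ((div_le_one₀ (lt_of_le_of_ne zero_le' (Ne.symm hv1))).2 hc) (not_le.2 h))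
    exact (max_eq_right (pow_le_pow_left' h12 n)).symm
end

section
/- Let V be a valuation domain with valuation v, nondivisible value group Γ, and fraction field K. Fix a, b, c ∈ K with v(a), v(b) > 0, v(a) > v(b), and n ∈ ℕ with n > 0 such that v(a)/n ∉ Γ and v(b)/n ∉ Γ (as elements of Γ⊗ℚ). Define φ(x) = ((x−c)ⁿ + a)/((x−c)ⁿ + b). Then for every d ∈ K: v(φ(d)) = 0 if n·v(d−c) < v(b); v(φ(d)) = n·v(d−c) − v(b) if v(b) < n·v(d−c) < v(a); and v(φ(d)) = v(a) − v(b) if n·v(d−c) > v(a). In particular φ(d) ∈ V for all d ∈ K, i.e., φ ∈ Int^R(K,V). -/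
/-- Let `v` be a valuation on `K` (written multiplicatively, so the additive condition
`v(a), v(b) > 0`, `v(a) > v(b)` becomes `v a < 1`, `v b < 1`, `v a < v b`), and suppose neither
`v(a)` nor `v(b)` is an `n`-th power in the value group (i.e. `v(a)/n, v(b)/n ∉ Γ`).  Let
`φ(x) = ((x−c)ⁿ + a)/((x−c)ⁿ + b)`.  Then for every `d ∈ K` the value `v(φ(d))` is as computed
case by case below; in particular `φ(d)` lies in the valuation ring for every `d ∈ K`. -/
theorem val_of_skolem_aux_function {K Γ₀ : Type*} [Field K]
    [LinearOrderedCommGroupWithZero Γ₀] (v : Valuation K Γ₀)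
    (a b c : K) (ha0 : a ≠ 0) (hb0 : b ≠ 0)
    (ha1 : v a < 1) (hb1 : v b < 1) (hab : v a < v b)
    (n : ℕ) (hn : 0 < n)
    (hna : ∀ x : K, x ≠ 0 → v x ^ n ≠ v a) (hnb : ∀ x : K, x ≠ 0 → v x ^ n ≠ v b) :
    ∀ d : K,
      (v b < v (d - c) ^ n → v (((d - c) ^ n + a) / ((d - c) ^ n + b)) = 1) ∧
      (v a < v (d - c) ^ n → v (d - c) ^ n < v b →
        v (((d - c) ^ n + a) / ((d - c) ^ n + b)) = v (d - c) ^ n / v b) ∧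
      (v (d - c) ^ n < v a →
        v (((d - c) ^ n + a) / ((d - c) ^ n + b)) = v a / v b) ∧
      v (((d - c) ^ n + a) / ((d - c) ^ n + b)) ≤ 1 := by
  intro d
  have hva : v a ≠ 0 := v.ne_zero_iff.mpr ha0
  have hvb : v b ≠ 0 := v.ne_zero_iff.mpr hb0
  have hta : v (d - c) ^ n ≠ v a := by
    rcases eq_or_ne (d - c) 0 with h | h
    · rw [h]
      simpa [zero_pow hn.ne'] using hva.symm
    · exact hna _ h
  have htb : v (d - c) ^ n ≠ v b := by
    rcases eq_or_ne (d - c) 0 with h | h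
    · rw [h]
      simpa [zero_pow hn.ne'] using hvb.symm
    · exact hnb _ h
  have hnum : v ((d - c) ^ n + a) = max (v (d - c) ^ n) (v a) := by
    rw [← v.map_pow]
    exact v.map_add_of_distinct_val (by rw [v.map_pow]; exact hta)
  have hden : v ((d - c) ^ n + b) = max (v (d - c) ^ n) (v b) := by
    rw [← v.map_pow]
    exact v.map_add_of_distinct_val (by rw [v.map_pow]; exact htb)
  have hmain : v (((d - c) ^ n + a) / ((d - c) ^ n + b)) =
      max (v (d - c) ^ n) (v a) / max (v (d - c) ^ n) (v b) := by
    rw [v.map_div, hnum, hden]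
  refine ⟨?_, ?_, ?_, ?_⟩
  · intro h1
    rw [hmain, max_eq_left (hab.trans h1).le, max_eq_left h1.le,
      div_self (ne_of_gt (lt_of_le_of_lt zero_le' h1))]
  · intro h1 h2
    rw [hmain, max_eq_left h1.le, max_eq_right h2.le]
  · intro h1
    rw [hmain, max_eq_right h1.le, max_eq_right (h1.trans hab).le]
  · rcases lt_or_gt_of_ne htb with h2 | h2
    · rcases lt_or_gt_of_ne hta with h1 | h1
      · rw [hmain, max_eq_right h1.le, max_eq_right (h1.trans hab).le]
        exact (div_le_one₀ (zero_lt_iff.mpr hvb)).mpr hab.le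
      · rw [hmain, max_eq_left h1.le, max_eq_right h2.le]
        exact (div_le_one₀ (zero_lt_iff.mpr hvb)).mpr h2.le
    · rw [hmain, max_eq_left (hab.trans h2).le, max_eq_left h2.le,
        div_self (ne_of_gt (lt_of_le_of_lt zero_le' h2))]
end

section
/- Let D be a domain with fraction field K and E ⊆ K a strongly coherent set for Int^R(E,D). Then for every nonzero φ ∈ K(x) and every nonzero finitely-generated ideal I of Int^R(E,D) with φI ⊆ Int^R(E,D), one has (φI)^Sk = φ·I^Sk. -/
variable {K : Type*} [Field K]

/-- The Skolem closure of an ideal `I` of `Int^R(E,D)`: the elements `g` whose value `g(a)`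
lies in the value ideal `I(a)` for every `a ∈ E`. -/
def SkClosure {K : Type*} [Field K] (E : Set K) (D : Subring K) (I : Ideal ↥(IntR E D)) :
    Set ↥(IntR E D) :=
  {g | ∀ a ∈ E, ∃ ρ ∈ I,
    RatFunc.eval (RingHom.id K) a (ρ : RatFunc K) = RatFunc.eval (RingHom.id K) a (g : RatFunc K)}

/-- `E` is strongly coherent for `Int^R(E,D)` if any rational function whose value lies in the
value ideal `I(a)` of a finitely generated ideal `I` for all but finitely many `a ∈ E` belongs
to the Skolem closure of `I`. -/
def StronglyCoherent {K : Type*} [Field K] (E : Set K) (D : Subring K) : Prop :=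
  ∀ I : Ideal ↥(IntR E D), I.FG → ∀ ψ : RatFunc K,
    {a ∈ E | ¬ (ψ.denom.eval₂ (RingHom.id K) a ≠ 0 ∧ ∃ ρ ∈ I,
      RatFunc.eval (RingHom.id K) a (ρ : RatFunc K) =
        RatFunc.eval (RingHom.id K) a ψ)}.Finite →
    ∃ g : ↥(IntR E D), (g : RatFunc K) = ψ ∧ g ∈ SkClosure E D I

lemma eval_inv_spec (φ : RatFunc K) (a : K)
    (hn : φ.num.eval₂ (RingHom.id K) a ≠ 0) (hd : φ.denom.eval₂ (RingHom.id K) a ≠ 0) :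
    (φ⁻¹).denom.eval₂ (RingHom.id K) a ≠ 0 ∧
      RatFunc.eval (RingHom.id K) a φ⁻¹ = (RatFunc.eval (RingHom.id K) a φ)⁻¹ := by
  have hφ : φ ≠ 0 := by
    rintro rfl
    simp at hn
  have hnum0 : φ.num ≠ 0 := RatFunc.num_ne_zero hφ
  have hinv : φ⁻¹ = algebraMap _ _ φ.denom / algebraMap _ (RatFunc K) φ.num := by
    conv_lhs => rw [← RatFunc.num_div_denom φ]
    rw [inv_div]
  have hdvd : (φ⁻¹).denom ∣ φ.num := (RatFunc.denom_dvd hnum0).mpr ⟨φ.denom, hinv⟩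
  have h1 : (φ⁻¹).denom.eval₂ (RingHom.id K) a ≠ 0 := eval₂_ne_zero_of_dvd hdvd hn
  refine ⟨h1, ?_⟩
  have hevφ : RatFunc.eval (RingHom.id K) a φ ≠ 0 := div_ne_zero hn hd
  have hm := RatFunc.eval_mul (f := RingHom.id K) (a := a) (x := φ) (y := φ⁻¹) hd h1
  rw [mul_inv_cancel₀ hφ, RatFunc.eval_one] at hm
  exact (inv_eq_of_mul_eq_one_right hm.symm).symm

/-- If `E` is strongly coherent for `Int^R(E,D)`, `φ ∈ K(x)` is nonzero, and `I` is a nonzero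
finitely generated ideal with `φI ⊆ Int^R(E,D)`, then `(φI)^Sk = φ·I^Sk`. -/
theorem skClosure_smul {K : Type*} [Field K] (D : Subring K) (E : Set K)
    (hSC : StronglyCoherent E D)
    (φ : RatFunc K) (hφ : φ ≠ 0)
    (I : Ideal ↥(IntR E D)) (hI0 : I ≠ ⊥) (hIfg : I.FG)
    (hmul : ∀ ψ : ↥(IntR E D), ψ ∈ I → φ * (ψ : RatFunc K) ∈ IntR E D)
    (J : Ideal ↥(IntR E D))
    (hJ : ∀ g : ↥(IntR E D), g ∈ J ↔ ∃ ψ ∈ I, (g : RatFunc K) = φ * (ψ : RatFunc K)) :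
    SkClosure E D J =
      {g : ↥(IntR E D) | ∃ h ∈ SkClosure E D I, (g : RatFunc K) = φ * (h : RatFunc K)} := by
  classical
  have hnum0 : φ.num ≠ 0 := RatFunc.num_ne_zero hφ
  have hden0 : φ.denom ≠ 0 := φ.denom_ne_zero
  have hfinN : {a : K | φ.num.eval₂ (RingHom.id K) a = 0}.Finite :=
    Polynomial.finite_setOf_isRoot hnum0
  have hfinD : {a : K | φ.denom.eval₂ (RingHom.id K) a = 0}.Finite :=
    Polynomial.finite_setOf_isRoot hden0
  -- J is finitely generated
  have hJfg : J.FG := by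
    obtain ⟨S, hS⟩ := hIfg
    let u : ↥(IntR E D) → ↥(IntR E D) := fun x =>
      if hx : x ∈ I then ⟨φ * (x : RatFunc K), hmul x hx⟩ else 0
    refine ⟨S.image u, le_antisymm ?_ ?_⟩
    · rw [Ideal.span_le]
      intro g hg
      simp only [Finset.coe_image, Set.mem_image, Finset.mem_coe] at hg
      obtain ⟨x, hxS, rfl⟩ := hg
      have hxI : x ∈ I := by
        rw [← hS]; exact Ideal.subset_span hxS
      rw [SetLike.mem_coe, hJ]
      exact ⟨x, hxI, by simp [u, hxI]⟩
    · intro g hg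
      rw [hJ] at hg
      obtain ⟨ψ, hψI, hgψ⟩ := hg
      have hψS : ψ ∈ Ideal.span (S : Set ↥(IntR E D)) := by rw [hS]; exact hψI
      have key : ∀ ψ0, ψ0 ∈ Ideal.span (S : Set ↥(IntR E D)) → ∀ g0 : ↥(IntR E D),
          (g0 : RatFunc K) = φ * (ψ0 : RatFunc K) →
          g0 ∈ Ideal.span ((S.image u : Finset ↥(IntR E D)) : Set ↥(IntR E D)) := by
        intro ψ0 hψ0
        induction hψ0 using Submodule.span_induction with
        | mem x hx =>
          intro g0 hg0
          have hxI : x ∈ I := by rw [← hS]; exact Ideal.subset_span hx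
          have hg0x : g0 = u x := by
            apply Subtype.ext
            simp [u, hxI, hg0]
          rw [hg0x]
          exact Ideal.subset_span (by
            simp only [Finset.coe_image, Set.mem_image, Finset.mem_coe]
            exact ⟨x, hx, rfl⟩)
        | zero =>
          intro g0 hg0
          have : g0 = 0 := Subtype.ext (by simpa using hg0)
          simp [this]
        | add x y hxmem hymem hx hy =>
          intro g0 hg0
          have hxI : x ∈ I := by rw [← hS]; exact hxmem
          have hyI : y ∈ I := by rw [← hS]; exact hymem
          have hx' := hx ⟨φ * (x : RatFunc K), hmul x hxI⟩ rfl
          have hy' := hy ⟨φ * (y : RatFunc K), hmul y hyI⟩ rfl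
          have hsum : g0 = ⟨φ * (x : RatFunc K), hmul x hxI⟩ +
              ⟨φ * (y : RatFunc K), hmul y hyI⟩ := by
            apply Subtype.ext
            rw [hg0]
            push_cast
            ring
          rw [hsum]
          exact Ideal.add_mem _ hx' hy'
        | smul r x hxmem hx =>
          intro g0 hg0
          have hxI : x ∈ I := by rw [← hS]; exact hxmem
          have hx' := hx ⟨φ * (x : RatFunc K), hmul x hxI⟩ rfl
          have hsm : g0 = r * (⟨φ * (x : RatFunc K), hmul x hxI⟩ : ↥(IntR E D)) := by
            apply Subtype.ext
            rw [hg0, smul_eq_mul]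
            push_cast
            ring
          rw [hsm]
          exact Ideal.mul_mem_left _ r hx'
      exact key ψ hψS g hgψ
  ext g
  simp only [Set.mem_setOf_eq]
  constructor
  · -- (φI)^Sk ⊆ φ · I^Sk
    intro hg
    set ψ : RatFunc K := φ⁻¹ * (g : RatFunc K) with hψdef
    have hφψ : φ * ψ = (g : RatFunc K) := by
      rw [hψdef, ← mul_assoc, mul_inv_cancel₀ hφ, one_mul]
    have hfin : {a ∈ E | ¬ (ψ.denom.eval₂ (RingHom.id K) a ≠ 0 ∧ ∃ ρ ∈ I,
        RatFunc.eval (RingHom.id K) a (ρ : RatFunc K) =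
          RatFunc.eval (RingHom.id K) a ψ)}.Finite := by
      apply Set.Finite.subset (hfinN.union hfinD)
      intro a ha
      obtain ⟨haE, hbad⟩ := ha
      by_contra hcon
      simp only [Set.mem_union, Set.mem_setOf_eq] at hcon
      push_neg at hcon
      obtain ⟨hn, hd⟩ := hcon
      apply hbad
      obtain ⟨hdinv, hevinv⟩ := eval_inv_spec φ a hn hd
      have hdg : (g : RatFunc K).denom.eval₂ (RingHom.id K) a ≠ 0 := (g.2 a haE).1
      have hdψ : ψ.denom.eval₂ (RingHom.id K) a ≠ 0 := by
        refine eval₂_ne_zero_of_dvd (RatFunc.denom_mul_dvd φ⁻¹ (g : RatFunc K)) ?_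
        rw [Polynomial.eval₂_mul]
        exact mul_ne_zero hdinv hdg
      refine ⟨hdψ, ?_⟩
      obtain ⟨ρJ, hρJ, hρJeval⟩ := hg a haE
      obtain ⟨ψI, hψII, hρJcoe⟩ := (hJ ρJ).mp hρJ
      refine ⟨ψI, hψII, ?_⟩
      have hdψI : (ψI : RatFunc K).denom.eval₂ (RingHom.id K) a ≠ 0 := (ψI.2 a haE).1
      have e1 : RatFunc.eval (RingHom.id K) a ψ =
          RatFunc.eval (RingHom.id K) a φ⁻¹ *
            RatFunc.eval (RingHom.id K) a (g : RatFunc K) :=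
        RatFunc.eval_mul (f := RingHom.id K) (a := a) hdinv hdg
      have e2 : RatFunc.eval (RingHom.id K) a (ρJ : RatFunc K) =
          RatFunc.eval (RingHom.id K) a φ *
            RatFunc.eval (RingHom.id K) a (ψI : RatFunc K) := by
        rw [hρJcoe]
        exact RatFunc.eval_mul (f := RingHom.id K) (a := a) hd hdψI
      have hevφ : RatFunc.eval (RingHom.id K) a φ ≠ 0 := div_ne_zero hn hd
      rw [e1, ← hρJeval, e2, hevinv, ← mul_assoc, inv_mul_cancel₀ hevφ, one_mul]
    obtain ⟨h, hcoe, hSk⟩ := hSC I hIfg ψ hfin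
    exact ⟨h, hSk, by rw [hcoe, hφψ]⟩
  · -- φ · I^Sk ⊆ (φI)^Sk
    rintro ⟨h, hSk, hcoe⟩
    have hfin : {a ∈ E | ¬ ((g : RatFunc K).denom.eval₂ (RingHom.id K) a ≠ 0 ∧ ∃ ρ ∈ J,
        RatFunc.eval (RingHom.id K) a (ρ : RatFunc K) =
          RatFunc.eval (RingHom.id K) a (g : RatFunc K))}.Finite := by
      apply Set.Finite.subset (hfinN.union hfinD)
      intro a ha
      obtain ⟨haE, hbad⟩ := ha
      by_contra hcon
      simp only [Set.mem_union, Set.mem_setOf_eq] at hcon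
      push_neg at hcon
      obtain ⟨hn, hd⟩ := hcon
      apply hbad
      have hdg : (g : RatFunc K).denom.eval₂ (RingHom.id K) a ≠ 0 := (g.2 a haE).1
      refine ⟨hdg, ?_⟩
      obtain ⟨ρI, hρII, hρIeval⟩ := hSk a haE
      refine ⟨⟨φ * (ρI : RatFunc K), hmul ρI hρII⟩, (hJ _).mpr ⟨ρI, hρII, rfl⟩, ?_⟩
      have hdρI : (ρI : RatFunc K).denom.eval₂ (RingHom.id K) a ≠ 0 := (ρI.2 a haE).1
      have hdh : (h : RatFunc K).denom.eval₂ (RingHom.id K) a ≠ 0 := (h.2 a haE).1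
      have e1 : RatFunc.eval (RingHom.id K) a (φ * (ρI : RatFunc K)) =
          RatFunc.eval (RingHom.id K) a φ *
            RatFunc.eval (RingHom.id K) a (ρI : RatFunc K) :=
        RatFunc.eval_mul (f := RingHom.id K) (a := a) hd hdρI
      have e2 : RatFunc.eval (RingHom.id K) a (g : RatFunc K) =
          RatFunc.eval (RingHom.id K) a φ *
            RatFunc.eval (RingHom.id K) a (h : RatFunc K) := by
        rw [hcoe]
        exact RatFunc.eval_mul (f := RingHom.id K) (a := a) hd hdh
      show RatFunc.eval (RingHom.id K) a (φ * (ρI : RatFunc K)) =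
        RatFunc.eval (RingHom.id K) a (g : RatFunc K)
      rw [e1, e2, hρIeval]
    obtain ⟨g', hg'coe, hg'Sk⟩ := hSC J hJfg (g : RatFunc K) hfin
    have hgg : g' = g := Subtype.ext hg'coe
    rwa [hgg] at hg'Sk
end

section
/- Let D be a domain, E ⊆ Frac(D), and ⋆₁, ⋆₂ integrally compatible star operations on D and on Int^R(E,D) respectively. If 𝔭 is a ⋆₁-prime of D (a prime with 𝔭^⋆₁ = 𝔭), then for every a ∈ E the pointed prime 𝔓_{𝔭,a} = {φ ∈ Int^R(E,D) | φ(a) ∈ 𝔭} is a ⋆₂-prime of Int^R(E,D). -/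
variable {K : Type*} [Field K]

/-- A star operation, restricted to the (nonzero) integral ideals of a domain `R`. -/
structure IdealStarOp (R : Type*) [CommRing R] where
  star : Ideal R → Ideal R
  star_principal : ∀ a : R, star (Ideal.span {a}) = Ideal.span {a}
  star_smul : ∀ a : R, a ≠ 0 → ∀ I : Ideal R, I ≠ ⊥ →
    star (Ideal.span {a} * I) = Ideal.span {a} * star I
  le_star : ∀ I : Ideal R, I ≠ ⊥ → I ≤ star I
  star_mono : ∀ I J : Ideal R, I ≠ ⊥ → I ≤ J → star I ≤ star J
  star_idem : ∀ I : Ideal R, I ≠ ⊥ → star (star I) = star I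

/-- If `⋆₁` (on `D`) and `⋆₂` (on `Int^R(E,D)`) are integrally compatible star operations and
`𝔭` is a (nonzero) `⋆₁`-prime of `D`, then for every `a ∈ E` the pointed prime
`𝔓_{𝔭,a} = {φ | φ(a) ∈ 𝔭}` is a `⋆₂`-prime of `Int^R(E,D)`. -/
theorem pointed_prime_star_prime {K : Type*} [Field K] (D : Subring K) (E : Set K)
    (s1 : IdealStarOp ↥D) (s2 : IdealStarOp ↥(IntR E D))
    (hcompat : ∀ I : Ideal ↥(IntR E D), ∀ a : K, ∀ ha : a ∈ E,
      s1.star (Ideal.map (evalHom E D a ha) (s2.star I)) =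
        s1.star (Ideal.map (evalHom E D a ha) I))
    (p : Ideal ↥D) (hp : p.IsPrime) (hp0 : p ≠ ⊥) (hps : s1.star p = p)
    (a : K) (ha : a ∈ E) :
    (Ideal.comap (evalHom E D a ha) p).IsPrime ∧
      s2.star (Ideal.comap (evalHom E D a ha) p) = Ideal.comap (evalHom E D a ha) p := by
  set f := evalHom E D a ha with hf
  set P := Ideal.comap f p with hP
  obtain ⟨c, hc, hc0⟩ := (Submodule.ne_bot_iff p).mp hp0
  have hφmem : (RatFunc.C (c : K)) ∈ IntR E D := by
    intro b hb
    constructor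
    · rw [RatFunc.denom_C]; simp
    · rw [RatFunc.eval_C]; simp only [RingHom.id_apply]; exact c.2
  set φc : ↥(IntR E D) := ⟨RatFunc.C (c : K), hφmem⟩ with hφc
  have hfφc : f φc = c := by
    apply Subtype.ext
    show RatFunc.eval (RingHom.id K) a (RatFunc.C (c : K)) = (c : K)
    rw [RatFunc.eval_C]; rfl
  have hφc0 : φc ≠ 0 := by
    intro h
    apply hc0
    apply Subtype.ext
    have := congrArg (Subtype.val) h
    simp only [hφc] at this
    have : RatFunc.C (c : K) = 0 := this
    have := (map_eq_zero (RatFunc.C : K →+* RatFunc K)).mp this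
    simpa using this
  have hφcP : φc ∈ P := by
    show f φc ∈ p
    rw [hfφc]; exact hc
  have hP0 : P ≠ ⊥ := (Submodule.ne_bot_iff P).mpr ⟨φc, hφcP, hφc0⟩
  have hle : P ≤ s2.star P := s2.le_star P hP0
  have hmapP_le : Ideal.map f P ≤ p := Ideal.map_le_iff_le_comap.mpr le_rfl
  have hcmem : c ∈ Ideal.map f P := by
    rw [← hfφc]; exact Ideal.mem_map_of_mem f hφcP
  have hmapP0 : Ideal.map f P ≠ ⊥ := (Submodule.ne_bot_iff _).mpr ⟨c, hcmem, hc0⟩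
  have hmapS0 : Ideal.map f (s2.star P) ≠ ⊥ := by
    refine (Submodule.ne_bot_iff _).mpr ⟨c, ?_, hc0⟩
    rw [← hfφc]; exact Ideal.mem_map_of_mem f (hle hφcP)
  have h1 : Ideal.map f (s2.star P) ≤ s1.star (Ideal.map f (s2.star P)) :=
    s1.le_star _ hmapS0
  rw [hcompat P a ha] at h1
  have h2 : s1.star (Ideal.map f P) ≤ s1.star p := s1.star_mono _ _ hmapP0 hmapP_le
  rw [hps] at h2
  have hkey : s2.star P ≤ P := Ideal.map_le_iff_le_comap.mp (h1.trans h2)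
  exact ⟨hp.comap f, le_antisymm hkey hle⟩
end

section
/- Let D = ⋂_λ V_λ be an intersection of a family of valuation overrings (inside Frac(D)), let ⋆ be the star operation I^⋆ = ⋂_λ I·V_λ, and let 𝔭_λ be the center of V_λ in D. If I is a proper ideal of D with I^{⋆_f} = I, then for every nonzero finitely-generated ideal J ⊆ I there exists λ with J ⊆ 𝔭_λ; consequently I ⊆ lim_ℱ 𝔭_λ for some filter ℱ on {𝔭_λ}. -/
/-- Let `D = ⋂ V_λ` be an intersection of a family of valuation overrings, let `⋆` be the star
operation `I^⋆ = ⋂ I V_λ`, and let `𝔭_λ` be the center of `V_λ` in `D`.  If `I` is a proper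
ideal of `D` with `I^{⋆_f} = I`, then every nonzero finitely generated ideal `J ⊆ I` is
contained in some `𝔭_λ`; consequently `I` is contained in a filter limit of the `𝔭_λ`. -/
theorem starf_ideal_le_filterLimit {K Λ : Type*} [Field K] [Nonempty Λ] (D : Subring K)
    (V : Λ → Subring K) [∀ l, ValuationRing ↥(V l)]
    (hle : ∀ l, D ≤ V l)
    (hint : (D : Set K) = ⋂ l, ↑(V l))
    (p : Λ → Ideal ↥D)
    (hp : ∀ l, p l = (IsLocalRing.maximalIdeal ↥(V l)).comap (Subring.inclusion (hle l)))
    (I : Ideal ↥D) (hItop : I ≠ ⊤)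
    (hIstar : ∀ J : Ideal ↥D, J ≠ ⊥ → J.FG → J ≤ I → ∀ x : ↥D,
      (∀ l, (x : K) ∈ Submodule.span ↥(V l) (Subtype.val '' (J : Set ↥D))) → x ∈ I) :
    (∀ J : Ideal ↥D, J ≠ ⊥ → J.FG → J ≤ I → ∃ l, J ≤ p l) ∧
      ∃ F : Filter Λ, F.NeBot ∧ ∀ x ∈ I, {l | x ∈ p l} ∈ F := by
  have key : ∀ J : Ideal ↥D, J ≠ ⊥ → J.FG → J ≤ I → ∃ l, J ≤ p l := by
    intro J hJ0 hJfg hJI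
    by_contra h
    push_neg at h
    have h1 : ∀ l, ((1 : ↥D) : K) ∈ Submodule.span ↥(V l) (Subtype.val '' (J : Set ↥D)) := by
      intro l
      obtain ⟨x, hxJ, hxp⟩ := SetLike.not_le_iff_exists.mp (h l)
      rw [hp l, Ideal.mem_comap, IsLocalRing.mem_maximalIdeal, mem_nonunits_iff, not_not] at hxp
      obtain ⟨u, hu⟩ := hxp
      have hxspan : (x : K) ∈ Submodule.span ↥(V l) (Subtype.val '' (J : Set ↥D)) :=
        Submodule.subset_span ⟨x, hxJ, rfl⟩
      have hs := Submodule.smul_mem _ ((u⁻¹ : (↥(V l))ˣ) : ↥(V l)) hxspan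
      have heq : ((u⁻¹ : (↥(V l))ˣ) : ↥(V l)) • (x : K) = ((1 : ↥D) : K) := by
        have h2 : ((u⁻¹ : (↥(V l))ˣ) : ↥(V l)) * Subring.inclusion (hle l) x = 1 := by
          rw [← hu]; exact u.inv_mul
        have h3 := congrArg (Subtype.val : ↥(V l) → K) h2
        push_cast at h3
        show (((u⁻¹ : (↥(V l))ˣ) : ↥(V l)) : K) * (x : K) = _
        simpa using h3
      rwa [heq] at hs
    have : (1 : ↥D) ∈ I := hIstar J hJ0 hJfg hJI 1 h1
    exact hItop (Ideal.eq_top_iff_one I |>.mpr this)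
  refine ⟨key, ?_⟩
  classical
  have main : ∀ xs : Finset ↥D, (↑xs : Set ↥D) ⊆ I → ∃ l, ∀ x ∈ xs, x ∈ p l := by
    intro xs hxs
    set J : Ideal ↥D := Ideal.span ↑xs with hJ
    by_cases hJ0 : J = ⊥
    · obtain ⟨l⟩ := ‹Nonempty Λ›
      refine ⟨l, fun x hx => ?_⟩
      have hx0 : x ∈ J := Ideal.subset_span hx
      rw [hJ0, Ideal.mem_bot] at hx0
      rw [hx0]; exact (p l).zero_mem
    · obtain ⟨l, hl⟩ := key J hJ0 (Submodule.fg_span xs.finite_toSet)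
        (Ideal.span_le.mpr hxs)
      exact ⟨l, fun x hx => hl (Ideal.subset_span hx)⟩
  refine ⟨Filter.generate {s | ∃ x ∈ I, s = {l | x ∈ p l}}, ?_,
    fun x hx => Filter.mem_generate_of_mem ⟨x, hx, rfl⟩⟩
  rw [Filter.generate_neBot_iff]
  intro t hts htfin
  have hchoice : ∀ s ∈ t, ∃ x, x ∈ I ∧ s = {l | x ∈ p l} := fun s hs => hts hs
  choose! f hfI hfs using hchoice
  obtain ⟨l, hl⟩ := main (htfin.toFinset.image f) (by
    intro x hx
    rw [Finset.coe_image, Set.Finite.coe_toFinset] at hx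
    obtain ⟨s, hs, rfl⟩ := hx
    exact hfI s hs)
  refine ⟨l, fun s hs => ?_⟩
  rw [hfs s hs]
  exact hl (f s) (Finset.mem_image_of_mem f (htfin.mem_toFinset.mpr hs))
end

section
/- Let V be a valuation domain with valuation v, value group Γ, principal maximal ideal 𝔪 = tV, and fraction field K. Define θ(x) = t(1+x⁴)/((1+tx²)(t+x²)). Then θ(a) ∈ V for every a ∈ K; more precisely v(θ(a)) > 0 when v(a) = 0, and θ(a) ∈ 1 + 𝔪 when v(a) ≠ 0. -/
/-- Let `V` be the valuation ring of a valuation `v` on `K`, with principal maximal ideal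
`𝔪 = tV` (multiplicatively: `v t < 1` and every `x` with `v x < 1` has `v x ≤ v t`).  Let
`θ(x) = t(1+x⁴)/((1+tx²)(t+x²))`.  Then `θ(a) ∈ V` for every `a ∈ K`; more precisely
`v(θ(a)) < 1` when `v a = 1`, and `θ(a) ∈ 1 + 𝔪` when `v a ≠ 1`. -/
theorem theta_integer_valued {K Γ₀ : Type*} [Field K] [LinearOrderedCommGroupWithZero Γ₀]
    (v : Valuation K Γ₀) (t : K) (ht0 : t ≠ 0) (ht1 : v t < 1)
    (hprin : ∀ x : K, v x < 1 → v x ≤ v t) :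
    ∀ a : K,
      v (t * (1 + a ^ 4) / ((1 + t * a ^ 2) * (t + a ^ 2))) ≤ 1 ∧
      (v a = 1 → v (t * (1 + a ^ 4) / ((1 + t * a ^ 2) * (t + a ^ 2))) < 1) ∧
      (v a ≠ 1 → ∃ m : K, v m < 1 ∧
        t * (1 + a ^ 4) / ((1 + t * a ^ 2) * (t + a ^ 2)) = 1 + m) := by
  intro a
  have htpos : (0 : Γ₀) < v t := v.pos_iff.2 ht0
  have htne : v t ≠ 0 := htpos.ne'
  have hvt2 : v (t ^ 2) < 1 := by
    rw [map_pow, pow_two]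
    calc v t * v t < 1 * 1 := mul_lt_mul_of_le_of_lt_of_nonneg_of_pos ht1.le ht1 zero_le' zero_lt_one
      _ = 1 := one_mul 1
  have h1t2 : v (1 + t ^ 2) = 1 := v.map_one_add_of_lt hvt2
  rcases lt_trichotomy (v a) 1 with hlt | heq | hgt
  · -- v a < 1 : θ = 1 + m with v m < 1
    have ha2 : v (a ^ 2) = v a * v a := by rw [map_pow, pow_two]
    have hat : v a ≤ v t := hprin a hlt
    have ha2t : v (a ^ 2) < v t := by
      rw [ha2]
      calc v a * v a ≤ v t * v t := mul_le_mul' hat hat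
        _ < v t * 1 := mul_lt_mul_of_le_of_lt_of_nonneg_of_pos le_rfl ht1 zero_le' htpos
        _ = v t := mul_one _
    have hden2 : v (t + a ^ 2) = v t := by
      rw [add_comm]; exact v.map_add_eq_of_lt_right ha2t
    have hden1 : v (1 + t * a ^ 2) = 1 := by
      apply v.map_one_add_of_lt
      rw [map_mul]
      calc v t * v (a ^ 2) ≤ 1 * v (a ^ 2) := mul_le_mul' ht1.le le_rfl
        _ = v (a ^ 2) := one_mul _
        _ < v t := ha2t
        _ < 1 := ht1
    have hDne : (1 + t * a ^ 2) * (t + a ^ 2) ≠ 0 := by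
      intro h
      have := v.map_mul (1 + t * a ^ 2) (t + a ^ 2)
      rw [h, v.map_zero, hden1, hden2, one_mul] at this
      exact htne this.symm
    set m : K := -(a ^ 2 * (1 + t ^ 2)) / ((1 + t * a ^ 2) * (t + a ^ 2)) with hm
    have heqn : t * (1 + a ^ 4) / ((1 + t * a ^ 2) * (t + a ^ 2)) = 1 + m := by
      rw [hm]; obtain ⟨hD1, hD2⟩ := mul_ne_zero_iff.1 hDne; field_simp; ring
    have hvm : v m < 1 := by
      rw [hm, map_div₀, v.map_neg, map_mul, map_mul, hden1, hden2, h1t2, mul_one, one_mul]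
      exact (div_lt_iff₀ htpos).2 (by rwa [one_mul])
    refine ⟨?_, fun h => absurd h hlt.ne, fun _ => ⟨m, hvm, heqn⟩⟩
    rw [heqn]
    calc v (1 + m) ≤ max (v 1) (v m) := v.map_add 1 m
      _ ≤ 1 := max_le (le_of_eq v.map_one) hvm.le
  · -- v a = 1
    have ha2 : v (a ^ 2) = 1 := by rw [map_pow, heq, one_pow]
    have ha4 : v (a ^ 4) = 1 := by rw [map_pow, heq, one_pow]
    have hden2 : v (t + a ^ 2) = 1 := by
      rw [v.map_add_eq_of_lt_right (by rw [ha2]; exact ht1), ha2]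
    have hden1 : v (1 + t * a ^ 2) = 1 := by
      apply v.map_one_add_of_lt
      rw [map_mul, ha2, mul_one]; exact ht1
    have hval : v (t * (1 + a ^ 4) / ((1 + t * a ^ 2) * (t + a ^ 2))) ≤ v t := by
      rw [map_div₀, map_mul, map_mul, hden1, hden2, one_mul, div_one]
      calc v t * v (1 + a ^ 4) ≤ v t * 1 := by
            apply mul_le_mul' le_rfl
            calc v (1 + a ^ 4) ≤ max (v 1) (v (a ^ 4)) := v.map_add 1 _
              _ ≤ 1 := by rw [v.map_one, ha4]; simp
        _ = v t := mul_one _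
    exact ⟨hval.trans ht1.le, fun _ => lt_of_le_of_lt hval ht1,
      fun h => absurd heq h⟩
  · -- v a > 1
    have hane : a ≠ 0 := by
      intro h; rw [h, v.map_zero] at hgt; exact absurd hgt (by simp)
    have hvane : v a ≠ 0 := v.ne_zero_iff.2 hane
    have hainv : v a⁻¹ < 1 := (v.one_lt_val_iff hane).1 hgt
    have hta : 1 ≤ v t * v a := by
      have h1 := hprin a⁻¹ hainv
      rw [map_inv₀] at h1
      have h2 := mul_le_mul' h1 (le_refl (v a))
      rwa [inv_mul_cancel₀ hvane] at h2
    have ha2gt : 1 < v (a ^ 2) := by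
      rw [map_pow, pow_two]
      calc (1:Γ₀) < v a := hgt
        _ = 1 * v a := (one_mul _).symm
        _ ≤ v a * v a := mul_le_mul' hgt.le le_rfl
    have hta2 : 1 < v (t * a ^ 2) := by
      rw [map_mul, map_pow, pow_two, ← mul_assoc]
      calc (1:Γ₀) < v a := hgt
        _ = 1 * v a := (one_mul _).symm
        _ ≤ v t * v a * v a := mul_le_mul' hta le_rfl
    have hden1 : v (1 + t * a ^ 2) = v (t * a ^ 2) := by
      apply v.map_add_eq_of_lt_right
      rw [v.map_one]; exact hta2
    have hden2 : v (t + a ^ 2) = v (a ^ 2) := by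
      exact v.map_add_eq_of_lt_right (ht1.trans ha2gt)
    have ha2ne : v (a ^ 2) ≠ 0 := v.ne_zero_iff.2 (pow_ne_zero 2 hane)
    have hDne : (1 + t * a ^ 2) * (t + a ^ 2) ≠ 0 := by
      intro h
      have := v.map_mul (1 + t * a ^ 2) (t + a ^ 2)
      rw [h, v.map_zero, hden1, hden2] at this
      rcases mul_eq_zero.1 this.symm with h' | h'
      · rw [map_mul] at h'
        rcases mul_eq_zero.1 h' with h'' | h''
        · exact htne h''
        · exact ha2ne h''
      · exact ha2ne h'
    set m : K := -(a ^ 2 * (1 + t ^ 2)) / ((1 + t * a ^ 2) * (t + a ^ 2)) with hm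
    have heqn : t * (1 + a ^ 4) / ((1 + t * a ^ 2) * (t + a ^ 2)) = 1 + m := by
      rw [hm]; obtain ⟨hD1, hD2⟩ := mul_ne_zero_iff.1 hDne; field_simp; ring
    have hvm : v m < 1 := by
      rw [hm, map_div₀, v.map_neg, map_mul, map_mul, hden1, hden2, h1t2, mul_one,
        mul_comm (v (t * a ^ 2)) (v (a ^ 2)), ← div_div, div_self ha2ne, one_div]
      exact (inv_lt_one₀ (zero_lt_one.trans hta2)).2 hta2
    refine ⟨?_, fun h => absurd h.symm hgt.ne, fun _ => ⟨m, hvm, heqn⟩⟩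
    rw [heqn]
    calc v (1 + m) ≤ max (v 1) (v m) := v.map_add 1 m
      _ ≤ 1 := max_le (le_of_eq v.map_one) hvm.le
end

section
/- Let V be a valuation domain with valuation v and fraction field K, with principal maximal ideal 𝔪 = tV, and let θ(x) = t(1+x⁴)/((1+tx²)(t+x²)). For nonzero φ₁, φ₂ ∈ K(x) both mapping a ∈ K into V, set ρ(x) = φ₁(x) + θ(φ₁(x)/φ₂(x))·φ₂(x). Then for every a ∈ K at which all expressions are defined and φ₂(a) ≠ 0, one has v(ρ(a)) = min{v(φ₁(a)), v(φ₂(a))}. -/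
/-- Let `V` be the valuation ring of a valuation `v` on `K` with principal maximal ideal
`𝔪 = tV`, and let `θ(x) = t(1+x⁴)/((1+tx²)(t+x²))`.  If `b₁ = φ₁(a)` and `b₂ = φ₂(a)` are
values in `V` with `b₂ ≠ 0`, then `ρ = b₁ + θ(b₁/b₂)·b₂` satisfies
`v ρ = max (v b₁) (v b₂)` (in additive notation, `min{v(φ₁(a)), v(φ₂(a))}`). -/
theorem val_rho_eq_max {K Γ₀ : Type*} [Field K] [LinearOrderedCommGroupWithZero Γ₀]
    (v : Valuation K Γ₀) (t : K) (ht0 : t ≠ 0) (ht1 : v t < 1)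
    (hprin : ∀ x : K, v x < 1 → v x ≤ v t)
    (b₁ b₂ : K) (hb1 : v b₁ ≤ 1) (hb2 : v b₂ ≤ 1) (hb20 : b₂ ≠ 0) :
    v (b₁ + t * (1 + (b₁ / b₂) ^ 4) /
        ((1 + t * (b₁ / b₂) ^ 2) * (t + (b₁ / b₂) ^ 2)) * b₂) = max (v b₁) (v b₂) := by
  set c : K := b₁ / b₂ with hc
  have hvt : v t ≠ 0 := by simpa [v.ne_zero_iff] using ht0
  have hvb2 : v b₂ ≠ 0 := by simpa [v.ne_zero_iff] using hb20
  have hb1c : b₁ = c * b₂ := by rw [hc, div_mul_cancel₀ _ hb20]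
  -- key computation: v (c + θ(c)) = max (v c) 1
  have key : v (c + t * (1 + c ^ 4) / ((1 + t * c ^ 2) * (t + c ^ 2))) = max (v c) 1 := by
    rcases eq_or_ne c 0 with hc0 | hc0
    · rw [hc0]
      simp [ht0]
    have hvc : v c ≠ 0 := by simpa [v.ne_zero_iff] using hc0
    rcases lt_trichotomy (v c) 1 with hlt | heq | hgt
    · -- case v c < 1 : θ(c) ≡ 1 mod 𝔪, result is a unit
      have hct : v c ≤ v t := hprin c hlt
      have hc2t : v (c ^ 2) < v t := by
        rw [map_pow]
        calc v c ^ 2 = v c * v c := sq (v c)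
          _ < v t * 1 := (mul_le_mul_left hct _).trans_lt (mul_lt_mul_of_pos_left hlt (zero_lt_iff.2 hvt))
          _ = v t := mul_one _
      have htc2 : v (t + c ^ 2) = v t := v.map_add_eq_of_lt_left hc2t
      have h1tc2 : v (1 + t * c ^ 2) = 1 := by
        refine v.map_one_add_of_lt ?_
        rw [v.map_mul]
        calc v t * v (c ^ 2) ≤ v t * 1 := mul_le_mul_right (le_of_lt (lt_trans hc2t ht1)) _
          _ = v t := mul_one _
          _ < 1 := ht1
      have hD1 : (1 + t * c ^ 2) ≠ 0 := by
        intro h; rw [h] at h1tc2; simp at h1tc2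
      have hD2 : (t + c ^ 2) ≠ 0 := by
        intro h; rw [h] at htc2; simp [hvt.symm] at htc2
      -- rewrite c + θ(c) = 1 + (c - c²(1+t²)/D)
      have hE : c + t * (1 + c ^ 4) / ((1 + t * c ^ 2) * (t + c ^ 2)) =
          1 + (c - c ^ 2 * (1 + t ^ 2) / ((1 + t * c ^ 2) * (t + c ^ 2))) := by
        rw [add_sub, eq_sub_iff_add_eq, add_assoc, ← add_div,
          show t * (1 + c ^ 4) + c ^ 2 * (1 + t ^ 2) = (1 + t * c ^ 2) * (t + c ^ 2) by ring,
          div_self (mul_ne_zero hD1 hD2)]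
        ring
      rw [hE]
      have h1t2 : v (1 + t ^ 2) ≤ 1 := by
        refine le_trans (v.map_add _ _) ?_
        simp only [v.map_one, map_pow, max_le_iff]
        exact ⟨le_refl 1, le_trans (pow_le_one' (le_of_lt ht1) 2) (le_refl 1)⟩
      have hXlt : v (c ^ 2 * (1 + t ^ 2) / ((1 + t * c ^ 2) * (t + c ^ 2))) < 1 := by
        rw [v.map_div, v.map_mul, v.map_mul, h1tc2, htc2, one_mul, map_pow]
        rw [div_lt_iff₀ (zero_lt_iff.mpr hvt), one_mul]
        calc v c ^ 2 * v (1 + t ^ 2) ≤ v c ^ 2 * 1 := mul_le_mul_right h1t2 _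
          _ = v c * v c := by rw [mul_one, sq]
          _ < v t * 1 := (mul_le_mul_left hct _).trans_lt (mul_lt_mul_of_pos_left hlt (zero_lt_iff.2 hvt))
          _ = v t := mul_one _
      have hsmall : v (c - c ^ 2 * (1 + t ^ 2) / ((1 + t * c ^ 2) * (t + c ^ 2))) < 1 := by
        refine lt_of_le_of_lt (v.map_sub _ _) ?_
        exact max_lt hlt hXlt
      rw [v.map_one_add_of_lt hsmall, max_eq_right (le_of_lt hlt)]
    · -- case v c = 1 : θ(c) is small
      have hc2 : v (c ^ 2) = 1 := by rw [map_pow, heq, one_pow]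
      have htc2 : v (t + c ^ 2) = 1 := by rw [v.map_add_eq_of_lt_right (by rw [hc2]; exact ht1), hc2]
      have h1tc2 : v (1 + t * c ^ 2) = 1 := by
        refine v.map_one_add_of_lt ?_
        rw [v.map_mul, hc2, mul_one]
        exact ht1
      have hθ : v (t * (1 + c ^ 4) / ((1 + t * c ^ 2) * (t + c ^ 2))) < v c := by
        rw [v.map_div, v.map_mul, v.map_mul, h1tc2, htc2, one_mul, div_one, heq]
        have h1c4 : v (1 + c ^ 4) ≤ 1 := by
          refine le_trans (v.map_add _ _) ?_
          simp [map_pow, heq]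
        calc v t * v (1 + c ^ 4) ≤ v t * 1 := mul_le_mul_right h1c4 _
          _ = v t := mul_one _
          _ < 1 := ht1
      rw [v.map_add_eq_of_lt_left hθ, heq, max_self]
    · -- case v c > 1
      have hinv : 1 ≤ v t * v c := by
        have h1 : v c⁻¹ < 1 := by
          rw [map_inv₀]
          exact inv_lt_one_of_one_lt₀ hgt
        have h2 := hprin c⁻¹ h1
        rw [map_inv₀] at h2
        calc (1 : Γ₀) = (v c)⁻¹ * v c := by rw [inv_mul_cancel₀ hvc]
          _ ≤ v t * v c := mul_le_mul_left h2 _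
      have hc2gt : (1 : Γ₀) < v (c ^ 2) := by
        rw [map_pow]
        exact one_lt_pow₀ hgt (by norm_num)
      have htc2 : v (t + c ^ 2) = v (c ^ 2) := v.map_add_eq_of_lt_right (lt_trans ht1 hc2gt)
      have hvtc2 : 1 < v (t * c ^ 2) := by
        rw [v.map_mul, map_pow, sq]
        calc (1 : Γ₀) < v c := hgt
          _ = 1 * v c := (one_mul _).symm
          _ ≤ (v t * v c) * v c := mul_le_mul_left hinv _
          _ = v t * (v c * v c) := by rw [mul_assoc]
      have h1tc2 : v (1 + t * c ^ 2) = v (t * c ^ 2) := by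
        refine v.map_add_eq_of_lt_right ?_
        rw [v.map_one]; exact hvtc2
      have h1c4 : v (1 + c ^ 4) = v (c ^ 4) := by
        refine v.map_add_eq_of_lt_right ?_
        rw [v.map_one, map_pow]
        exact one_lt_pow₀ hgt (by norm_num)
      have hθ : v (t * (1 + c ^ 4) / ((1 + t * c ^ 2) * (t + c ^ 2))) = 1 := by
        have hvc2 : v (c ^ 2) ≠ 0 := by simpa [v.ne_zero_iff] using pow_ne_zero 2 hc0
        have e4 : v (c ^ 4) = v (c ^ 2) * v (c ^ 2) := by
          rw [← v.map_mul, ← pow_add]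
        rw [v.map_div, v.map_mul, v.map_mul, h1tc2, htc2, h1c4, e4, v.map_mul]
        rw [div_eq_one_iff_eq (mul_ne_zero (mul_ne_zero hvt hvc2) hvc2)]
        exact (mul_assoc _ _ _).symm
      rw [v.map_add_eq_of_lt_left (by rw [hθ]; exact hgt), max_eq_left (le_of_lt hgt)]
  -- now reduce the goal to `key`
  have hrw : b₁ + t * (1 + c ^ 4) / ((1 + t * c ^ 2) * (t + c ^ 2)) * b₂ =
      (c + t * (1 + c ^ 4) / ((1 + t * c ^ 2) * (t + c ^ 2))) * b₂ := by
    rw [hb1c]; ring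
  rw [hrw, v.map_mul, key]
  rw [hb1c, v.map_mul]
  rw [← max_mul_mul_right, one_mul]
end

section
/- Let V be a valuation domain with valuation v and maximal ideal 𝔪, and t ∈ 𝔪 nonzero. In the ring Int^R(V) = {φ ∈ Frac(V)(x) | φ(d) ∈ V for all d ∈ V}, the element tx belongs to the Skolem closure of the ideal (x², t²): for every d ∈ V, td ∈ (d², t²) as ideals of V. -/
variable {K : Type*} [Field K]

/-- Let `V` be a valuation domain (a valuation subring of its fraction field `K`) with
maximal ideal `𝔪`, and `t ∈ 𝔪` nonzero.  In `Int^R(V)` the element `tx` lies in the Skolem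
closure of the ideal `(x², t²)`: for every `d ∈ V`, `td ∈ (d², t²)` as ideals of `V`. -/
theorem tx_mem_skolemClosure {K : Type*} [Field K] (V : Subring K) [ValuationRing ↥V]
    (hfrac : ∀ x : K, x ∈ V ∨ x⁻¹ ∈ V)
    (t : ↥V) (ht0 : t ≠ 0) (htm : ¬ IsUnit t) :
    (∀ d : ↥V, t * d ∈ Ideal.span ({d ^ 2, t ^ 2} : Set ↥V)) ∧
      ∃ (hX : (RatFunc.X : RatFunc K) ∈ IntR (V : Set K) V)
        (hT : algebraMap K (RatFunc K) (t : K) ∈ IntR (V : Set K) V),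
        ∀ a ∈ (V : Set K),
          ∃ ψ ∈ Ideal.span ({(⟨RatFunc.X, hX⟩ : ↥(IntR (V : Set K) V)) ^ 2,
              (⟨algebraMap K (RatFunc K) (t : K), hT⟩ : ↥(IntR (V : Set K) V)) ^ 2} :
              Set ↥(IntR (V : Set K) V)),
            RatFunc.eval (RingHom.id K) a (ψ : RatFunc K) =
              RatFunc.eval (RingHom.id K) a
                ((algebraMap K (RatFunc K) (t : K)) * RatFunc.X) := by
  have hmem1 : ∀ d : ↥V, t * d ∈ Ideal.span ({d ^ 2, t ^ 2} : Set ↥V) := by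
    intro d
    obtain ⟨c, hc | hc⟩ := ValuationRing.cond d t
    · rw [Ideal.mem_span_pair]
      exact ⟨c, 0, by rw [← hc]; ring⟩
    · rw [Ideal.mem_span_pair]
      exact ⟨0, c, by rw [← hc]; ring⟩
  have hCmem : ∀ c : ↥V, (RatFunc.C (c : K) : RatFunc K) ∈ IntR (V : Set K) V := by
    intro c a ha
    refine ⟨?_, ?_⟩ <;> simp [RatFunc.denom_C, RatFunc.eval_C, c.2]
  have hX : (RatFunc.X : RatFunc K) ∈ IntR (V : Set K) V := by
    intro a ha
    exact ⟨by simp [RatFunc.denom_X], by simpa [RatFunc.eval_X] using ha⟩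
  have hT : algebraMap K (RatFunc K) (t : K) ∈ IntR (V : Set K) V := by
    rw [RatFunc.algebraMap_eq_C]
    exact hCmem t
  refine ⟨hmem1, hX, hT, ?_⟩
  intro a ha
  have hRHS : RatFunc.eval (RingHom.id K) a
      ((algebraMap K (RatFunc K) (t : K)) * RatFunc.X) = (t : K) * a := by
    rw [RatFunc.algebraMap_eq_C, ← RatFunc.algebraMap_C, ← RatFunc.algebraMap_X, ← map_mul,
      RatFunc.eval_algebraMap]
    simp
  obtain ⟨c, hc | hc⟩ := ValuationRing.cond (⟨a, ha⟩ : ↥V) t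
  · -- a * c = t
    have hc' : a * (c : K) = (t : K) := congrArg Subtype.val hc
    refine ⟨(⟨RatFunc.C (c : K), hCmem c⟩ : ↥(IntR (V : Set K) V)) *
        (⟨RatFunc.X, hX⟩ : ↥(IntR (V : Set K) V)) ^ 2, ?_, ?_⟩
    · exact Ideal.mul_mem_left _ _ (Ideal.subset_span (Set.mem_insert _ _))
    · rw [hRHS]
      push_cast
      rw [← RatFunc.algebraMap_C, ← RatFunc.algebraMap_X, ← map_pow, ← map_mul,
        RatFunc.eval_algebraMap]
      simp only [Algebra.algebraMap_self, Polynomial.eval₂_mul, Polynomial.eval₂_C,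
        Polynomial.eval₂_pow, Polynomial.eval₂_X, RingHom.id_apply]
      linear_combination a * hc'
  · -- t * c = a
    have hc' : (t : K) * (c : K) = a := congrArg Subtype.val hc
    refine ⟨(⟨RatFunc.C (c : K), hCmem c⟩ : ↥(IntR (V : Set K) V)) *
        (⟨algebraMap K (RatFunc K) (t : K), hT⟩ : ↥(IntR (V : Set K) V)) ^ 2, ?_, ?_⟩
    · exact Ideal.mul_mem_left _ _ (Ideal.subset_span (Set.mem_insert_of_mem _ rfl))
    · rw [hRHS]
      push_cast
      rw [RatFunc.algebraMap_eq_C, ← RatFunc.algebraMap_C (c : K), ← RatFunc.algebraMap_C (t : K),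
        ← map_pow, ← map_mul, RatFunc.eval_algebraMap]
      simp only [Algebra.algebraMap_self, Polynomial.eval₂_mul, Polynomial.eval₂_C,
        Polynomial.eval₂_pow, RingHom.id_apply]
      linear_combination (t : K) * hc'
end
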